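/- Distilled counting core of Theorem 3: let n, m, k : ℕ, let H_n := EuclideanSpace ℂ ((Fin n → Bool) × Bool), and let 𝒰 be a finite set of continuous linear operators on H_n such that for every CNF_{n,m}^k-representable function f there exists U ∈ 𝒰 with ‖U − T_f‖ < √2/2 in operator norm. Then the cardinality of 𝒰 is at least Nat.choose (Nat.choose n k) m. Consequently, any collection of unitaries (e.g. those implementable by circuits of a given size from a fixed finite gate set) that √2/2-approximates every CNF_{n,m}^k oracle must be at least this numerous. -/

import Mathlib

/-- The oracle operator `T_f` on `H_n = EuclideanSpace ℂ ((Fin n → Bool) × Bool)`,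
given coordinatewise by `(T_f v) (x, c) = v (x, c ⊕ f x)`; it models the quantum
oracle `|x⟩|c⟩ ↦ |x⟩|c ⊕ f(x)⟩`. -/
noncomputable def oracleOp (n : ℕ) (f : (Fin n → Bool) → Bool) :
    EuclideanSpace ℂ ((Fin n → Bool) × Bool) →L[ℂ]
      EuclideanSpace ℂ ((Fin n → Bool) × Bool) :=
  LinearMap.toContinuousLinearMap
    { toFun := fun v => WithLp.toLp 2 (fun p : (Fin n → Bool) × Bool => v (p.1, xor p.2 (f p.1)))
      map_add' := by intro _ _; ext; simp
      map_smul' := by intro _ _; ext; simp }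

open scoped ComplexInnerProductSpace

lemma oracle_apply_single (n : ℕ) (f : (Fin n → Bool) → Bool) (x : Fin n → Bool) :
    oracleOp n f (EuclideanSpace.single ((x, false) : (Fin n → Bool) × Bool) (1:ℂ))
      = EuclideanSpace.single (x, f x) (1:ℂ) := by
  ext p
  obtain ⟨y, c⟩ := p
  show EuclideanSpace.single ((x, false) : (Fin n → Bool) × Bool) (1:ℂ)
      (y, xor c (f y)) = _
  simp only [EuclideanSpace.single_apply, Prod.mk.injEq]
  by_cases h1 : y = x
  · subst h1
    cases c <;> cases hfx : f y <;> simp [hfx]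
  · simp [h1]

lemma oracle_dist (n : ℕ) (f g : (Fin n → Bool) → Bool) (x : Fin n → Bool)
    (hfg : f x ≠ g x) : Real.sqrt 2 ≤ ‖oracleOp n f - oracleOp n g‖ := by
  set v : EuclideanSpace ℂ ((Fin n → Bool) × Bool) :=
    EuclideanSpace.single (x, false) 1 with hv
  have hD : (oracleOp n f - oracleOp n g) v
      = EuclideanSpace.single (x, f x) (1:ℂ) - EuclideanSpace.single (x, g x) (1:ℂ) := by
    rw [ContinuousLinearMap.sub_apply, hv, oracle_apply_single, oracle_apply_single]
  have hinner : ⟪EuclideanSpace.single ((x, f x) : (Fin n → Bool) × Bool) (1:ℂ),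
      EuclideanSpace.single (x, g x) (1:ℂ)⟫ = 0 := by
    rw [EuclideanSpace.inner_single_left]
    simp [EuclideanSpace.single_apply, Prod.ext_iff, hfg, Ne.symm hfg]
  have hnormDv : ‖(oracleOp n f - oracleOp n g) v‖ = Real.sqrt 2 := by
    rw [hD]
    have hsq : ‖EuclideanSpace.single ((x, f x) : (Fin n → Bool) × Bool) (1:ℂ)
        - EuclideanSpace.single (x, g x) (1:ℂ)‖^2 = 2 := by
      rw [@norm_sub_sq ℂ]
      simp [hinner, EuclideanSpace.norm_single]
      norm_num
    calc ‖_‖ = Real.sqrt (‖EuclideanSpace.single ((x, f x) : (Fin n → Bool) × Bool) (1:ℂ)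
        - EuclideanSpace.single (x, g x) (1:ℂ)‖^2) := (Real.sqrt_sq (norm_nonneg _)).symm
      _ = Real.sqrt 2 := by rw [hsq]
  have hvnorm : ‖v‖ = 1 := by rw [hv, EuclideanSpace.norm_single]; simp
  calc Real.sqrt 2 = ‖(oracleOp n f - oracleOp n g) v‖ := hnormDv.symm
    _ ≤ ‖oracleOp n f - oracleOp n g‖ * ‖v‖ := ContinuousLinearMap.le_opNorm _ _
    _ = ‖oracleOp n f - oracleOp n g‖ := by rw [hvnorm, mul_one]

/-- A function is CNF-representable (m clauses, each with at most k literals;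
a literal is a pair (i, b) asserting x i = b). -/
def CNFRepresentable (n m k : ℕ) (f : (Fin n → Bool) → Bool) : Prop :=
  ∃ C : Fin m → Finset (Fin n × Bool),
    (∀ j : Fin m, (C j).card ≤ k) ∧
    ∀ x : Fin n → Bool, (f x = true ↔ ∀ j : Fin m, ∃ l ∈ C j, x l.1 = l.2)

/-- Distilled counting core of Theorem 3: any finite set of operators that
approximates the oracle of every CNF-representable function to within
operator-norm error < sqrt(2)/2 has at least (C(n,k) choose m) elements. -/
theorem counting_lower_bound (n m k : ℕ)
    (𝒰 : Finset (EuclideanSpace ℂ ((Fin n → Bool) × Bool) →L[ℂ]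
      EuclideanSpace ℂ ((Fin n → Bool) × Bool)))
    (h : ∀ f : (Fin n → Bool) → Bool, CNFRepresentable n m k f →
      ∃ U ∈ 𝒰, ‖U - oracleOp n f‖ < Real.sqrt 2 / 2) :
    Nat.choose (Nat.choose n k) m ≤ 𝒰.card := by
  classical
  set A : Finset (Finset (Fin n)) := Finset.powersetCard k Finset.univ with hA
  set B : Finset (Finset (Finset (Fin n))) := Finset.powersetCard m A with hB
  have hBcard : B.card = Nat.choose (Nat.choose n k) m := by
    rw [hB, Finset.card_powersetCard, hA, Finset.card_powersetCard]
    simp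
  -- the monotone CNF function attached to a clause family
  set F : Finset (Finset (Fin n)) → ((Fin n → Bool) → Bool) :=
    fun S x => decide (∀ t ∈ S, ∃ i ∈ t, x i = true) with hF
  -- representability
  have hrep : ∀ S ∈ B, CNFRepresentable n m k (F S) := by
    intro S hS
    rw [hB, Finset.mem_powersetCard] at hS
    obtain ⟨hSA, hScard⟩ := hS
    have e : Fin m ≃ S := (S.equivFin.trans (finCongr hScard)).symm
    refine ⟨fun j => ((e j : Finset (Fin n))).image (fun i => (i, true)), ?_, ?_⟩
    · intro j
      have ht : ((e j : Finset (Fin n))).card = k := by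
        have := hSA (e j).2
        rw [hA, Finset.mem_powersetCard] at this
        exact this.2
      calc _ ≤ ((e j : Finset (Fin n))).card := Finset.card_image_le
        _ ≤ k := ht.le
    · intro x
      rw [hF]
      simp only [decide_eq_true_iff]
      constructor
      · intro hx j
        obtain ⟨i, hi, hxi⟩ := hx (e j) (e j).2
        exact ⟨(i, true), Finset.mem_image_of_mem _ hi, hxi⟩
      · intro hx t ht
        obtain ⟨l, hl, hxl⟩ := hx (e.symm ⟨t, ht⟩)
        rw [e.apply_symm_apply] at hl
        obtain ⟨i, hi, rfl⟩ := Finset.mem_image.1 hl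
        exact ⟨i, hi, hxl⟩
  -- injectivity of F on B
  have hFinj : ∀ S ∈ B, ∀ T ∈ B, F S = F T → S = T := by
    have key : ∀ S ∈ B, ∀ T ∈ B, F S = F T → S ⊆ T := by
      intro S hS T hT hST t ht
      rw [hB, Finset.mem_powersetCard] at hS hT
      have htk : t.card = k := by
        have := hS.1 ht; rw [hA, Finset.mem_powersetCard] at this; exact this.2
      set x : Fin n → Bool := fun i => decide (i ∉ t) with hx
      have hSx : F S x = false := by
        rw [hF]
        simp only [decide_eq_false_iff_not, not_forall]
        refine ⟨t, ht, ?_⟩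
        simp only [not_exists, not_and]
        intro i hi
        simp [hx, hi]
      have hTx : F T x = false := by rw [← hST]; exact hSx
      rw [hF] at hTx
      simp only [decide_eq_false_iff_not, not_forall] at hTx
      obtain ⟨t', ht', hnt'⟩ := hTx
      simp only [not_exists, not_and] at hnt'
      have hsub : t' ⊆ t := by
        intro i hi
        by_contra hit
        exact hnt' i hi (by simp [hx, hit])
      have ht'k : t'.card = k := by
        have := hT.1 ht'; rw [hA, Finset.mem_powersetCard] at this; exact this.2
      have : t' = t := Finset.eq_of_subset_of_card_le hsub (by rw [htk, ht'k])
      rwa [← this]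
    intro S hS T hT hST
    exact Finset.Subset.antisymm (key S hS T hT hST) (key T hT S hS hST.symm)
  -- the choice map into 𝒰
  set φ : Finset (Finset (Fin n)) →
      (EuclideanSpace ℂ ((Fin n → Bool) × Bool) →L[ℂ]
        EuclideanSpace ℂ ((Fin n → Bool) × Bool)) :=
    fun S => if hr : CNFRepresentable n m k (F S) then (h (F S) hr).choose else 0 with hφ
  have hφmem : ∀ S ∈ B, φ S ∈ 𝒰 := by
    intro S hS
    rw [hφ]; simp only [hrep S hS, dif_pos]
    exact (h (F S) (hrep S hS)).choose_spec.1
  have hφnorm : ∀ S ∈ B, ‖φ S - oracleOp n (F S)‖ < Real.sqrt 2 / 2 := by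
    intro S hS
    rw [hφ]; simp only [hrep S hS, dif_pos]
    exact (h (F S) (hrep S hS)).choose_spec.2
  have hφinj : Set.InjOn φ B := by
    intro S hS T hT hUeq
    apply hFinj S hS T hT
    by_contra hne
    obtain ⟨x, hx⟩ : ∃ x, F S x ≠ F T x := by
      by_contra hc
      push_neg at hc
      exact hne (funext hc)
    have h1 := hφnorm S hS
    have h2 := hφnorm T hT
    have htri : ‖oracleOp n (F S) - oracleOp n (F T)‖
        ≤ ‖φ S - oracleOp n (F S)‖ + ‖φ T - oracleOp n (F T)‖ := by
      calc ‖oracleOp n (F S) - oracleOp n (F T)‖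
          = dist (oracleOp n (F S)) (oracleOp n (F T)) := (dist_eq_norm _ _).symm
        _ ≤ dist (oracleOp n (F S)) (φ S) + dist (φ S) (oracleOp n (F T)) :=
            dist_triangle _ _ _
        _ = ‖φ S - oracleOp n (F S)‖ + ‖φ T - oracleOp n (F T)‖ := by
            rw [dist_comm, dist_eq_norm, dist_eq_norm, hUeq]
    have := oracle_dist n (F S) (F T) x hx
    have : Real.sqrt 2 < Real.sqrt 2 / 2 + Real.sqrt 2 / 2 := by
      linarith [this, htri, h1, h2]
    linarith
  calc Nat.choose (Nat.choose n k) m = B.card := hBcard.symm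
    _ ≤ 𝒰.card := Finset.card_le_card_of_injOn φ hφmem hφinj
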